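/- Let A₀ be a real p×n matrix, let q ∈ ℝⁿ be a row vector, and let c₁ > 0 be a real constant. Let A₁ be the matrix obtained by stacking the rows of A₀ together with the rows q and c₁·q, and let A₂ be the matrix obtained by stacking the rows of A₀ together with the row √(1+c₁²)·q. Then A₁ᵀA₁ = A₂ᵀA₂, and for every column index j the L1 norm of the j-th column of A₂ is at most the L1 norm of the j-th column of A₁, with strict inequality for each j with q_j ≠ 0; consequently, the L1 sensitivity satisfies ‖A₂‖₁ ≤ ‖A₁‖₁, so under the ε-matrix mechanism the error of A₂ on every query is at most that of A₁. -/

import Mathlib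

open Matrix BigOperators

/-- The L1 sensitivity of a matrix: the maximum over columns of the sum of the
absolute values of the column's entries. -/
noncomputable def l1Sens {ι : Type*} [Fintype ι] {n : ℕ} (A : Matrix ι (Fin n) ℝ) : ℝ :=
  ⨆ j, ∑ i, |A i j|

/-- **Redundant queries under the ε-matrix mechanism.**
Replacing the pair of rows `q, c₁·q` (with `c₁ > 0`) by the single row `√(1+c₁²)·q`
preserves the Gram matrix, weakly decreases every column L1 norm (strictly in every
column `j` with `q j ≠ 0`), hence weakly decreases the L1 sensitivity; consequently the
ε-matrix-mechanism error of `A₂` on every query is at most that of `A₁`. -/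
theorem redundant_queries_l1 (p n : ℕ)
    (A₀ : Matrix (Fin p) (Fin n) ℝ) (q : Fin n → ℝ) (c₁ : ℝ) (hc₁ : 0 < c₁)
    (A₁ : Matrix (Fin p ⊕ Fin 2) (Fin n) ℝ)
    (A₂ : Matrix (Fin p ⊕ Fin 1) (Fin n) ℝ)
    (hA₁ : A₁ = Matrix.of (Sum.elim A₀ ![q, c₁ • q]))
    (hA₂ : A₂ = Matrix.of (Sum.elim A₀ ![Real.sqrt (1 + c₁ ^ 2) • q])) :
    A₁ᵀ * A₁ = A₂ᵀ * A₂ ∧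
    (∀ j : Fin n, (∑ i, |A₂ i j|) ≤ ∑ i, |A₁ i j|) ∧
    (∀ j : Fin n, q j ≠ 0 → (∑ i, |A₂ i j|) < ∑ i, |A₁ i j|) ∧
    l1Sens A₂ ≤ l1Sens A₁ ∧
    (A₁.rank = n → ∀ w : Fin n → ℝ,
      (l1Sens A₂) ^ 2 * (w ⬝ᵥ ((A₂ᵀ * A₂)⁻¹).mulVec w)
        ≤ (l1Sens A₁) ^ 2 * (w ⬝ᵥ ((A₁ᵀ * A₁)⁻¹).mulVec w)) := by
  have hc2 : (0:ℝ) ≤ 1 + c₁ ^ 2 := by positivity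
  have hsq : Real.sqrt (1 + c₁ ^ 2) ^ 2 = 1 + c₁ ^ 2 := Real.sq_sqrt hc2
  have hslt : Real.sqrt (1 + c₁ ^ 2) < 1 + c₁ := by
    have h1 : (1 + c₁ ^ 2) < (1 + c₁) ^ 2 := by nlinarith
    calc Real.sqrt (1 + c₁ ^ 2) < Real.sqrt ((1 + c₁) ^ 2) :=
          Real.sqrt_lt_sqrt hc2 h1
      _ = 1 + c₁ := by rw [Real.sqrt_sq (by linarith)]
  have hgram : A₁ᵀ * A₁ = A₂ᵀ * A₂ := by
    subst hA₁ hA₂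
    ext j k
    simp [Matrix.mul_apply, Fintype.sum_sum_type, Fin.sum_univ_succ, Sum.elim]
    linear_combination (-(q j * q k)) * hsq
  have hcol : ∀ j : Fin n, (∑ i, |A₂ i j|) ≤ ∑ i, |A₁ i j| := by
    intro j
    subst hA₁ hA₂
    simp [Fintype.sum_sum_type, Fin.sum_univ_succ, Sum.elim, abs_mul, abs_of_pos hc₁,
      abs_of_nonneg (Real.sqrt_nonneg _)]
    nlinarith [abs_nonneg (q j), hslt]
  have hcols : ∀ j : Fin n, q j ≠ 0 → (∑ i, |A₂ i j|) < ∑ i, |A₁ i j| := by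
    intro j hq
    subst hA₁ hA₂
    simp [Fintype.sum_sum_type, Fin.sum_univ_succ, Sum.elim, abs_mul, abs_of_pos hc₁,
      abs_of_nonneg (Real.sqrt_nonneg _)]
    have : 0 < |q j| := abs_pos.mpr hq
    nlinarith [hslt]
  have hsens : l1Sens A₂ ≤ l1Sens A₁ := by
    rcases Nat.eq_zero_or_pos n with hn | hn
    · subst hn
      simp [l1Sens, ciSup_of_empty]
    · exact ciSup_mono (Set.Finite.bddAbove (Set.finite_range _)) hcol
  refine ⟨hgram, hcol, hcols, hsens, ?_⟩
  intro hrank w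
  have h2nonneg : 0 ≤ l1Sens A₂ := by
    rcases Nat.eq_zero_or_pos n with hn | hn
    · subst hn; simp [l1Sens, ciSup_of_empty]
    · exact Real.iSup_nonneg fun j => Finset.sum_nonneg fun i _ => abs_nonneg _
  -- positive definiteness of the Gram matrix
  have hG : (A₁ᵀ * A₁).PosDef := by
    have hpsd : (A₁ᵀ * A₁).PosSemidef := by
      have := Matrix.posSemidef_conjTranspose_mul_self A₁
      simpa using this
    have hrk : (A₁ᵀ * A₁).rank = n := by
      rw [Matrix.rank_transpose_mul_self, hrank]
    have hinj : Function.Injective ((A₁ᵀ * A₁).mulVecLin) := by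
      rw [← LinearMap.ker_eq_bot]
      have hsurj : Function.Surjective ((A₁ᵀ * A₁).mulVecLin) := by
        rw [← LinearMap.range_eq_top]
        apply Submodule.eq_top_of_finrank_eq
        rw [← Matrix.rank, hrk]; simp
      exact LinearMap.ker_eq_bot_of_injective
        ((LinearMap.injective_iff_surjective).mpr hsurj)
    refine PosDef.of_dotProduct_mulVec_pos hpsd.1 (fun x hx => ?_)
    have hne : (A₁ᵀ * A₁) *ᵥ x ≠ 0 := fun h => hx (hinj (by
      rw [Matrix.mulVecLin_apply, Matrix.mulVecLin_apply, h, Matrix.mulVec_zero]))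
    have h0 : star x ⬝ᵥ (A₁ᵀ * A₁) *ᵥ x ≠ 0 := fun h =>
      hne ((hpsd.dotProduct_mulVec_zero_iff x).mp h)
    exact (hpsd.dotProduct_mulVec_nonneg x).lt_of_ne (Ne.symm h0)
  have hinv : ((A₁ᵀ * A₁)⁻¹).PosSemidef := hG.inv.posSemidef
  have hx : 0 ≤ w ⬝ᵥ ((A₁ᵀ * A₁)⁻¹).mulVec w := by
    have := hinv.dotProduct_mulVec_nonneg w
    simpa using this
  rw [← hgram]
  exact mul_le_mul_of_nonneg_right (pow_le_pow_left₀ h2nonneg hsens 2) hx
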